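/- Fix α ∈ (1/2, 1), C ∈ ℝ and c' ≥ 0, and for each n ≥ 2 set R_n = 2 ln n + C and p_n = (cosh(α(R_n/2 − c')) − 1)/(cosh(α R_n) − 1). Then there exists a constant c > 0 such that for every ε ∈ (0, 1) there is an N with the following property: for all n ≥ N, if X is a binomial random variable with parameters n and p_n (e.g. PMF.binomial), then P[ X < (1 − ε) · c · n^{1−α} ] ≤ exp( −(ε²/2) · c · n^{1−α} ). In particular, the number of vertices of a hyperbolic random graph lying in B_0(R_n/2 − c') is at least (1 − ε) c n^{1−α} with probability 1 − 2^{−Ω(n^{1−α})}. -/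

import Mathlib

open Real Finset
open scoped ENNReal

lemma exp_neg_le_quad {ε : ℝ} (hε0 : 0 ≤ ε) : Real.exp (-ε) ≤ 1 - ε + ε ^ 2 / 2 := by
  have h1 : 1 + ε + ε ^ 2 / 2 ≤ Real.exp ε := Real.quadratic_le_exp_of_nonneg hε0
  have h2 : Real.exp (-ε) * Real.exp ε = 1 := by rw [← Real.exp_add]; simp
  nlinarith [Real.exp_pos (-ε), Real.exp_pos ε,
    mul_le_mul_of_nonneg_left h1 (Real.exp_pos (-ε)).le]

lemma binomial_chernoff (p : ℝ) (hp0 : 0 ≤ p) (n : ℕ)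
    (h : Real.toNNReal p ≤ 1) (μ : ℝ) (hμ0 : 0 ≤ μ) (hμ : μ ≤ n * p)
    (ε : ℝ) (hε0 : 0 < ε) (hε1 : ε < 1) :
    (PMF.binomial (Real.toNNReal p) h n).toMeasure
      {k : Fin (n + 1) | ((k : ℕ) : ℝ) < (1 - ε) * μ}
      ≤ ENNReal.ofReal (Real.exp (-(ε ^ 2 / 2) * μ)) := by
  have hp1 : p ≤ 1 := Real.toNNReal_le_one.mp h
  set P := ENNReal.ofReal p with hP
  set t : ℝ := -ε with ht
  set a : ℝ := (1 - ε) * μ with ha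
  have hQ : (1 : ℝ≥0∞) - P = ENNReal.ofReal (1 - p) := by
    rw [hP, ENNReal.ofReal_sub _ hp0, ENNReal.ofReal_one]
  rw [PMF.toMeasure_apply_fintype]
  calc ∑ k : Fin (n + 1),
        Set.indicator {k : Fin (n + 1) | ((k : ℕ) : ℝ) < a} (⇑(PMF.binomial (Real.toNNReal p) h n)) k
      ≤ ∑ k : Fin (n + 1),
          ENNReal.ofReal (Real.exp (t * (((k : ℕ) : ℝ) - a))) * (PMF.binomial (Real.toNNReal p) h n) k := by
        apply Finset.sum_le_sum
        intro k _
        by_cases hk : ((k : ℕ) : ℝ) < a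
        · simp only [Set.indicator_apply, Set.mem_setOf_eq, hk, if_true]
          conv_lhs => rw [← one_mul ((PMF.binomial (Real.toNNReal p) h n) k)]
          apply mul_le_mul_left
          rw [← ENNReal.ofReal_one]
          apply ENNReal.ofReal_le_ofReal
          have hy : 0 ≤ t * (((k : ℕ) : ℝ) - a) := by rw [ht]; nlinarith
          calc (1 : ℝ) = Real.exp 0 := Real.exp_zero.symm
            _ ≤ _ := Real.exp_le_exp.mpr hy
        · simp only [Set.indicator_apply, Set.mem_setOf_eq, hk, if_false]
          exact zero_le
    _ = ENNReal.ofReal (Real.exp (-(t * a))) * ∑ k : Fin (n + 1),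
          (ENNReal.ofReal (Real.exp t) * P) ^ (k : ℕ) *
            (ENNReal.ofReal (1 - p)) ^ (n - (k : ℕ)) * ((n.choose (k : ℕ)) : ℝ≥0∞) := by
        rw [Finset.mul_sum]
        apply Finset.sum_congr rfl
        intro k _
        rw [PMF.binomial_apply]
        have hPc : (((Real.toNNReal p : NNReal)) : ℝ≥0∞) = P := rfl
        rw [hPc]
        have h1 : Real.exp (t * (((k : ℕ) : ℝ) - a))
            = Real.exp (-(t * a)) * Real.exp t ^ (k : ℕ) := by
          rw [← Real.exp_nat_mul, ← Real.exp_add]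
          congr 1
          ring
        rw [h1, ENNReal.ofReal_mul (Real.exp_nonneg _), ENNReal.ofReal_pow (Real.exp_nonneg _),
          hQ]
        simp only [Fin.val_last]
        ring
    _ = ENNReal.ofReal (Real.exp (-(t * a))) *
          (ENNReal.ofReal (Real.exp t) * P + ENNReal.ofReal (1 - p)) ^ n := by
        congr 1
        rw [add_pow]
        exact Fin.sum_univ_eq_sum_range
          (fun m => (ENNReal.ofReal (Real.exp t) * P) ^ m *
            ENNReal.ofReal (1 - p) ^ (n - m) * ((n.choose m) : ℝ≥0∞)) (n + 1)
    _ = ENNReal.ofReal (Real.exp (-(t * a)) * (Real.exp t * p + (1 - p)) ^ n) := by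
        rw [hP, ← ENNReal.ofReal_mul (Real.exp_nonneg _),
          ← ENNReal.ofReal_add (by positivity) (by linarith),
          ← ENNReal.ofReal_pow (by nlinarith [Real.exp_nonneg t, mul_nonneg (Real.exp_nonneg t) hp0]),
          ← ENNReal.ofReal_mul (Real.exp_nonneg _)]
    _ ≤ ENNReal.ofReal (Real.exp (-(ε ^ 2 / 2) * μ)) := by
        apply ENNReal.ofReal_le_ofReal
        have hx0 : 0 ≤ Real.exp t * p + (1 - p) :=
          add_nonneg (mul_nonneg (Real.exp_nonneg _) hp0) (by linarith)
        have hxe : Real.exp t * p + (1 - p) ≤ Real.exp (p * (Real.exp t - 1)) := by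
          calc Real.exp t * p + (1 - p) = p * (Real.exp t - 1) + 1 := by ring
            _ ≤ _ := Real.add_one_le_exp _
        have hxn : (Real.exp t * p + (1 - p)) ^ n
            ≤ Real.exp ((n : ℝ) * (p * (Real.exp t - 1))) := by
          rw [Real.exp_nat_mul]
          exact pow_le_pow_left₀ hx0 hxe n
        calc Real.exp (-(t * a)) * (Real.exp t * p + (1 - p)) ^ n
            ≤ Real.exp (-(t * a)) * Real.exp ((n : ℝ) * (p * (Real.exp t - 1))) :=
              mul_le_mul_of_nonneg_left hxn (Real.exp_nonneg _)
          _ = Real.exp (-(t * a) + (n : ℝ) * (p * (Real.exp t - 1))) := (Real.exp_add _ _).symm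
          _ ≤ Real.exp (-(ε ^ 2 / 2) * μ) := by
              apply Real.exp_le_exp.mpr
              rw [ht, ha]
              have he1 : Real.exp (-ε) ≤ 1 - ε + ε ^ 2 / 2 := exp_neg_le_quad hε0.le
              have he0 : Real.exp (-ε) - 1 ≤ 0 := by nlinarith
              have h3 : (n : ℝ) * (p * (Real.exp (-ε) - 1)) ≤ μ * (Real.exp (-ε) - 1) := by
                nlinarith [mul_le_mul_of_nonpos_right hμ he0]
              nlinarith [h3, mul_nonneg hμ0 (sub_nonneg.mpr he1)]

/-- Chernoff-type lower-tail bound for the number of vertices of a hyperbolic random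
graph lying in the disk `B_0(R_n/2 - c')`: there is a constant `c > 0` such that for
every `ε ∈ (0,1)` and all sufficiently large `n`, a binomial random variable `X` with
parameters `n` and `p_n = (cosh(α(R_n/2 - c')) - 1)/(cosh(α R_n) - 1)` satisfies
`P[X < (1-ε) c n^(1-α)] ≤ exp(-(ε²/2) c n^(1-α))`. -/
theorem binomial_center_vertices_lower_tail (α C c' : ℝ)
    (hα : 1 / 2 < α) (hα1 : α < 1) (hc' : 0 ≤ c') :
    ∃ c > 0, ∀ ε : ℝ, 0 < ε → ε < 1 → ∃ N : ℕ, ∀ n : ℕ, N ≤ n →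
      ∀ h : Real.toNNReal
          ((Real.cosh (α * ((2 * Real.log n + C) / 2 - c')) - 1) /
            (Real.cosh (α * (2 * Real.log n + C)) - 1)) ≤ 1,
        (PMF.binomial
            (Real.toNNReal
              ((Real.cosh (α * ((2 * Real.log n + C) / 2 - c')) - 1) /
                (Real.cosh (α * (2 * Real.log n + C)) - 1))) h n).toMeasure
            {k : Fin (n + 1) | ((k : ℕ) : ℝ) < (1 - ε) * (c * (n : ℝ) ^ (1 - α))}
          ≤ ENNReal.ofReal (Real.exp (-(ε ^ 2 / 2) * (c * (n : ℝ) ^ (1 - α)))) := by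
  have hα0 : (0 : ℝ) < α := by linarith
  refine ⟨Real.exp (-α * (C / 2 + c')) / 4, by positivity, ?_⟩
  intro ε hε0 hε1
  obtain ⟨N, hN⟩ := exists_nat_ge
    (Real.exp (max (-C / 2 + 1) ((Real.log 4 - α * (C / 2 - c')) / α)))
  refine ⟨N, ?_⟩
  intro n hn h
  have hnR : Real.exp (max (-C / 2 + 1) ((Real.log 4 - α * (C / 2 - c')) / α)) ≤ (n : ℝ) :=
    hN.trans (Nat.cast_le.mpr hn)
  have hn0 : (0 : ℝ) < (n : ℝ) := lt_of_lt_of_le (Real.exp_pos _) hnR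
  have hlog : max (-C / 2 + 1) ((Real.log 4 - α * (C / 2 - c')) / α) ≤ Real.log n :=
    (Real.le_log_iff_exp_le hn0).mpr hnR
  have hlog1 : -C / 2 + 1 ≤ Real.log n := le_trans (le_max_left _ _) hlog
  have hlog2 : (Real.log 4 - α * (C / 2 - c')) / α ≤ Real.log n :=
    le_trans (le_max_right _ _) hlog
  set L : ℝ := Real.log n with hL
  set u : ℝ := α * ((2 * L + C) / 2 - c') with hu
  set v : ℝ := α * (2 * L + C) with hv
  -- basic facts
  have hv0 : 0 < v := by rw [hv]; nlinarith
  have hu4 : (4 : ℝ) ≤ Real.exp u := by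
    have h4 : Real.log 4 - α * (C / 2 - c') ≤ L * α := (div_le_iff₀ hα0).mp hlog2
    have : Real.log 4 ≤ u := by rw [hu]; nlinarith
    calc (4 : ℝ) = Real.exp (Real.log 4) := (Real.exp_log (by norm_num)).symm
      _ ≤ Real.exp u := Real.exp_le_exp.mpr this
  have hcv : Real.cosh v ≤ Real.exp v := by
    rw [Real.cosh_eq]
    have : Real.exp (-v) ≤ Real.exp v := Real.exp_le_exp.mpr (by linarith)
    linarith
  have hdenpos : 0 < Real.cosh v - 1 :=
    sub_pos.mpr (Real.one_lt_cosh.mpr (ne_of_gt hv0))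
  have hden : Real.cosh v - 1 ≤ Real.exp v := by linarith
  have hnum : Real.exp u / 4 ≤ Real.cosh u - 1 := by
    rw [Real.cosh_eq]
    have := Real.exp_nonneg (-u)
    linarith
  set p : ℝ := (Real.cosh u - 1) / (Real.cosh v - 1) with hp
  have hp0 : 0 ≤ p := div_nonneg (by linarith [Real.one_le_cosh u]) hdenpos.le
  have hplb : Real.exp u / 4 / Real.exp v ≤ p :=
    div_le_div₀ (by linarith [Real.one_le_cosh u]) hnum hdenpos hden
  have hexpuv : Real.exp u / 4 / Real.exp v
      = Real.exp (-(α * L)) * Real.exp (-α * (C / 2 + c')) / 4 := by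
    have huv : u - v = -(α * L) + -α * (C / 2 + c') := by rw [hu, hv]; ring
    rw [div_right_comm, ← Real.exp_sub, huv, Real.exp_add]
  have hnn : (n : ℝ) ^ (1 - α) = (n : ℝ) * Real.exp (-(α * L)) := by
    rw [Real.rpow_def_of_pos hn0, hL,
      show Real.log (n : ℝ) * (1 - α) = Real.log (n : ℝ) + -(α * Real.log (n : ℝ)) by ring,
      Real.exp_add, Real.exp_log hn0]
  have hμ0 : 0 ≤ Real.exp (-α * (C / 2 + c')) / 4 * (n : ℝ) ^ (1 - α) := by positivity
  have hμle : Real.exp (-α * (C / 2 + c')) / 4 * (n : ℝ) ^ (1 - α) ≤ (n : ℝ) * p := by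
    rw [hnn]
    calc Real.exp (-α * (C / 2 + c')) / 4 * ((n : ℝ) * Real.exp (-(α * L)))
        = (n : ℝ) * (Real.exp u / 4 / Real.exp v) := by rw [hexpuv]; ring
      _ ≤ (n : ℝ) * p := mul_le_mul_of_nonneg_left hplb hn0.le
  exact binomial_chernoff p hp0 n h _ hμ0 hμle ε hε0 hε1
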